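/- Let S be a second countable locally compact Hausdorff groupoid with Haar system {κ^u}, μ a Radon measure on S⁽⁰⁾, ν = μ∘κ, ν₀ a finite measure equivalent to ν, and [μ] = s_*ν₀ the saturation of μ. Then [μ] is quasi-invariant, and if μ is itself quasi-invariant then μ and [μ] are equivalent measures. -/

import Mathlib

open MeasureTheory Filter Topology

/-- Algebraic data of a groupoid: arrows, objects (units), range, source,
unit inclusion, (total extensions of) composition and inversion. -/
structure GroupoidData (Arr : Type) (Obj : Type) where
  r : Arr → Obj
  s : Arr → Obj
  unit : Obj → Arr
  comp : Arr → Arr → Arr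
  inv : Arr → Arr

/-- The axioms making `GroupoidData` an honest groupoid (composition is only
required to behave on composable pairs). -/
structure GroupoidData.IsGroupoid {Arr Obj : Type} (D : GroupoidData Arr Obj) : Prop where
  r_unit : ∀ u, D.r (D.unit u) = u
  s_unit : ∀ u, D.s (D.unit u) = u
  r_comp : ∀ a b, D.s a = D.r b → D.r (D.comp a b) = D.r a
  s_comp : ∀ a b, D.s a = D.r b → D.s (D.comp a b) = D.s b
  comp_assoc : ∀ a b c, D.s a = D.r b → D.s b = D.r c →
    D.comp (D.comp a b) c = D.comp a (D.comp b c)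
  unit_comp : ∀ a, D.comp (D.unit (D.r a)) a = a
  comp_unit : ∀ a, D.comp a (D.unit (D.s a)) = a
  r_inv : ∀ a, D.r (D.inv a) = D.s a
  s_inv : ∀ a, D.s (D.inv a) = D.r a
  inv_comp : ∀ a, D.comp (D.inv a) a = D.unit (D.s a)
  comp_inv : ∀ a, D.comp a (D.inv a) = D.unit (D.r a)

/-- A left action of the groupoid `G` on a set `X` with moment map `rX`;
`lact γ x` is only meaningful when `G.s γ = rX x`. -/
structure IsLeftActionOf {ArrG ObjG X : Type} (G : GroupoidData ArrG ObjG)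
    (rX : X → ObjG) (lact : ArrG → X → X) : Prop where
  moment : ∀ γ x, G.s γ = rX x → rX (lact γ x) = G.r γ
  unit_act : ∀ x, lact (G.unit (rX x)) x = x
  comp_act : ∀ γ ξ x, G.s γ = G.r ξ → G.s ξ = rX x →
    lact (G.comp γ ξ) x = lact γ (lact ξ x)

/-- A right action of the groupoid `H` on a set `X` with moment map `sX`;
`ract x η` is only meaningful when `sX x = H.r η`. -/
structure IsRightActionOf {ArrH ObjH X : Type} (H : GroupoidData ArrH ObjH)
    (sX : X → ObjH) (ract : X → ArrH → X) : Prop where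
  moment : ∀ x η, sX x = H.r η → sX (ract x η) = H.s η
  unit_act : ∀ x, ract x (H.unit (sX x)) = x
  comp_act : ∀ x η ζ, sX x = H.r η → H.s η = H.r ζ →
    ract x (H.comp η ζ) = ract (ract x η) ζ

/-- The algebraic part of `X` being a `(G,H)`-equivalence: commuting free
left `G`- and right `H`-actions, each moment map invariant under the other
action, whose fibres are exactly the orbits of the other action, and both
moment maps surjective. -/
structure IsEquivalenceData {ArrG ObjG ArrH ObjH X : Type}
    (G : GroupoidData ArrG ObjG) (H : GroupoidData ArrH ObjH)
    (rX : X → ObjG) (sX : X → ObjH)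
    (lact : ArrG → X → X) (ract : X → ArrH → X) : Prop where
  left_action : IsLeftActionOf G rX lact
  right_action : IsRightActionOf H sX ract
  commute : ∀ γ x η, G.s γ = rX x → sX x = H.r η →
    ract (lact γ x) η = lact γ (ract x η)
  rX_ract : ∀ x η, sX x = H.r η → rX (ract x η) = rX x
  sX_lact : ∀ γ x, G.s γ = rX x → sX (lact γ x) = sX x
  free_left : ∀ γ x, G.s γ = rX x → lact γ x = x → γ = G.unit (rX x)
  free_right : ∀ x η, sX x = H.r η → ract x η = x → η = H.unit (sX x)
  rX_fibres : ∀ x y, rX x = rX y ↔ ∃ η, sX x = H.r η ∧ ract x η = y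
  sX_fibres : ∀ x y, sX x = sX y ↔ ∃ γ, G.s γ = rX x ∧ lact γ x = y
  rX_surj : Function.Surjective rX
  sX_surj : Function.Surjective sX

/-- Continuity of the structure maps of a topological groupoid. -/
structure IsTopologicalGroupoid {Arr Obj : Type} [TopologicalSpace Arr]
    [TopologicalSpace Obj] (D : GroupoidData Arr Obj) : Prop where
  continuous_r : Continuous D.r
  continuous_s : Continuous D.s
  continuous_unit : Continuous D.unit
  continuous_inv : Continuous D.inv
  continuous_comp : Continuous fun p : {q : Arr × Arr // D.s q.1 = D.r q.2} =>
    D.comp p.val.1 p.val.2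

/-- A Haar system for groupoid data `D`, relative to a set `Real` of
"genuine" arrows (take `Real = Set.univ` for an honest groupoid): a family
of Radon measures `κ u`, `u` a unit, with support exactly the genuine arrows
with range `u`, left invariant, and continuous against compactly supported
continuous functions. -/
def IsHaarSystemOn {Arr Obj : Type} [TopologicalSpace Arr] [TopologicalSpace Obj]
    [MeasurableSpace Arr] (D : GroupoidData Arr Obj) (Real : Set Arr)
    (κ : Obj → MeasureTheory.Measure Arr) : Prop :=
  (∀ u, κ u ({a | D.r a = u} ∩ Real)ᶜ = 0) ∧
  (∀ u U, IsOpen U → (U ∩ ({a | D.r a = u} ∩ Real)).Nonempty → 0 < κ u U) ∧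
  (∀ u K, IsCompact K → κ u K < ⊤) ∧
  (∀ a ∈ Real, ∀ f : Arr → ℝ, Continuous f → HasCompactSupport f →
    ∫ b, f (D.comp a b) ∂(κ (D.s a)) = ∫ b, f b ∂(κ (D.r a))) ∧
  (∀ f : Arr → ℝ, Continuous f → HasCompactSupport f →
    Continuous fun u => ∫ b, f b ∂(κ u))

/-- The measure `ν = μ ∘ κ` on the arrows induced by a measure `μ` on the
units and a Haar system `κ`. -/
noncomputable def nuMeasure {Arr Obj : Type} [MeasurableSpace Arr] [MeasurableSpace Obj]
    (κ : Obj → MeasureTheory.Measure Arr) (μ : MeasureTheory.Measure Obj) :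
    MeasureTheory.Measure Arr :=
  μ.bind κ

/-- Quasi-invariance of a measure `μ` on the unit space: `ν = μ∘κ` is
equivalent to its image under the inversion map. -/
def IsQuasiInvariant {Arr Obj : Type} [MeasurableSpace Arr] [MeasurableSpace Obj]
    (κ : Obj → MeasureTheory.Measure Arr) (inv : Arr → Arr)
    (μ : MeasureTheory.Measure Obj) : Prop :=
  nuMeasure κ μ ≪ (nuMeasure κ μ).map inv ∧ (nuMeasure κ μ).map inv ≪ nuMeasure κ μ


section GroupoidAlgebra

namespace GroupoidData

variable {Arr Obj : Type} {D : GroupoidData Arr Obj}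

lemma IsGroupoid.inv_inv (hD : D.IsGroupoid) (a : Arr) : D.inv (D.inv a) = a := by
  have e1 : D.s (D.inv (D.inv a)) = D.s a := by rw [hD.s_inv, hD.r_inv]
  calc D.inv (D.inv a) = D.comp (D.inv (D.inv a)) (D.unit (D.s a)) := by
        rw [← e1, hD.comp_unit]
    _ = D.comp (D.inv (D.inv a)) (D.comp (D.inv a) a) := by rw [hD.inv_comp]
    _ = D.comp (D.comp (D.inv (D.inv a)) (D.inv a)) a :=
        (hD.comp_assoc _ _ _ (hD.s_inv _) (hD.s_inv a)).symm
    _ = D.comp (D.unit (D.s (D.inv a))) a := by rw [hD.inv_comp]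
    _ = D.comp (D.unit (D.r a)) a := by rw [hD.s_inv]
    _ = a := hD.unit_comp a

lemma IsGroupoid.inv_cancel_left (hD : D.IsGroupoid) {a b : Arr} (h : D.r b = D.s a) :
    D.comp (D.inv a) (D.comp a b) = b := by
  calc D.comp (D.inv a) (D.comp a b)
      = D.comp (D.comp (D.inv a) a) b := (hD.comp_assoc _ _ _ (hD.s_inv a) h.symm).symm
    _ = D.comp (D.unit (D.s a)) b := by rw [hD.inv_comp]
    _ = D.comp (D.unit (D.r b)) b := by rw [h]
    _ = b := hD.unit_comp b

lemma IsGroupoid.inv_comp_eq (hD : D.IsGroupoid) {a b : Arr} (h : D.s a = D.r b) :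
    D.inv (D.comp a b) = D.comp (D.inv b) (D.inv a) := by
  have hy : D.r (D.comp (D.inv b) (D.inv a)) = D.s b := by
    rw [hD.r_comp _ _ (by rw [hD.s_inv, hD.r_inv, h]), hD.r_inv]
  have key : D.comp (D.comp a b) (D.comp (D.inv b) (D.inv a)) = D.unit (D.r a) := by
    calc D.comp (D.comp a b) (D.comp (D.inv b) (D.inv a))
        = D.comp a (D.comp b (D.comp (D.inv b) (D.inv a))) :=
          hD.comp_assoc _ _ _ h hy.symm
      _ = D.comp a (D.comp (D.comp b (D.inv b)) (D.inv a)) := by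
          rw [hD.comp_assoc b (D.inv b) (D.inv a) (hD.r_inv b).symm
            (by rw [hD.s_inv, hD.r_inv]; exact h.symm)]
      _ = D.comp a (D.comp (D.unit (D.r b)) (D.inv a)) := by rw [hD.comp_inv]
      _ = D.comp a (D.comp (D.unit (D.r (D.inv a))) (D.inv a)) := by rw [hD.r_inv, h]
      _ = D.comp a (D.inv a) := by rw [hD.unit_comp]
      _ = D.unit (D.r a) := hD.comp_inv a
  have hsx : D.s (D.comp a b) = D.r (D.comp (D.inv b) (D.inv a)) := by
    rw [hD.s_comp _ _ h, hy]
  calc D.inv (D.comp a b)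
      = D.comp (D.inv (D.comp a b)) (D.unit (D.s (D.inv (D.comp a b)))) :=
        (hD.comp_unit _).symm
    _ = D.comp (D.inv (D.comp a b)) (D.unit (D.r (D.comp a b))) := by rw [hD.s_inv]
    _ = D.comp (D.inv (D.comp a b)) (D.unit (D.r a)) := by rw [hD.r_comp _ _ h]
    _ = D.comp (D.inv (D.comp a b)) (D.comp (D.comp a b) (D.comp (D.inv b) (D.inv a))) := by
        rw [key]
    _ = D.comp (D.comp (D.inv (D.comp a b)) (D.comp a b)) (D.comp (D.inv b) (D.inv a)) :=
        (hD.comp_assoc _ _ _ (hD.s_inv _) hsx).symm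
    _ = D.comp (D.unit (D.s (D.comp a b))) (D.comp (D.inv b) (D.inv a)) := by rw [hD.inv_comp]
    _ = D.comp (D.unit (D.r (D.comp (D.inv b) (D.inv a)))) (D.comp (D.inv b) (D.inv a)) := by
        rw [hsx]
    _ = D.comp (D.inv b) (D.inv a) := hD.unit_comp _

end GroupoidData

end GroupoidAlgebra
section RadonAux

variable {X : Type} [TopologicalSpace X] [T2Space X] [SecondCountableTopology X]
  [LocallyCompactSpace X] [MeasurableSpace X] [BorelSpace X]

/-- On a second countable locally compact Hausdorff space, the measure of an open set is the
supremum of integrals of compactly supported continuous functions vanishing outside of it. -/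
lemma measure_isOpen_eq_biSup (ρ : Measure X) [IsFiniteMeasureOnCompacts ρ]
    {U : Set X} (hU : IsOpen U) :
    ρ U = ⨆ (f : X → ℝ) (_ : Continuous f ∧ HasCompactSupport f ∧
      (∀ x, f x ∈ Set.Icc (0:ℝ) 1) ∧ ∀ x ∉ U, f x = 0),
      ∫⁻ x, ENNReal.ofReal (f x) ∂ρ := by
  haveI : Measure.Regular ρ := inferInstance
  apply le_antisymm
  · rw [hU.measure_eq_iSup_isCompact]
    refine iSup_le fun K => iSup_le fun hKU => iSup_le fun hK => ?_
    obtain ⟨f, hf1, hf0, hfc, hfIcc⟩ := exists_continuous_one_zero_of_isCompact hK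
      hU.isClosed_compl (Set.disjoint_left.2 fun x hx hx' => hx' (hKU hx))
    have hmem : Continuous (f : X → ℝ) ∧ HasCompactSupport (f : X → ℝ) ∧
        (∀ x, (f : X → ℝ) x ∈ Set.Icc (0:ℝ) 1) ∧ ∀ x ∉ U, (f : X → ℝ) x = 0 :=
      ⟨f.continuous, hfc, hfIcc, fun x hx => hf0 hx⟩
    refine le_trans ?_ (le_iSup₂ (f := fun (g : X → ℝ) _ => ∫⁻ x, ENNReal.ofReal (g x) ∂ρ)
      (f : X → ℝ) hmem)
    rw [← lintegral_indicator_one hK.measurableSet]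
    refine lintegral_mono fun x => ?_
    by_cases hx : x ∈ K
    · simp [hx, hf1 hx]
    · simp [hx]
  · refine iSup_le fun f => iSup_le fun hf => ?_
    rw [← lintegral_indicator_one hU.measurableSet]
    refine lintegral_mono fun x => ?_
    by_cases hx : x ∈ U
    · simpa [hx] using ENNReal.ofReal_le_one.2 (hf.2.2.1 x).2
    · simp [hx, hf.2.2.2 x hx]

/-- Two Borel measures, finite on compacts, on a second countable locally compact Hausdorff
space which integrate all compactly supported continuous `[0,1]`-valued functions alike are
equal. -/
lemma measure_ext_of_cc {ρ₁ ρ₂ : Measure X} [IsFiniteMeasureOnCompacts ρ₁]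
    [IsFiniteMeasureOnCompacts ρ₂]
    (h : ∀ f : X → ℝ, Continuous f → HasCompactSupport f → (∀ x, f x ∈ Set.Icc (0:ℝ) 1) →
      ∫⁻ x, ENNReal.ofReal (f x) ∂ρ₁ = ∫⁻ x, ENNReal.ofReal (f x) ∂ρ₂) : ρ₁ = ρ₂ := by
  haveI : Measure.Regular ρ₁ := inferInstance
  haveI : Measure.Regular ρ₂ := inferInstance
  have hopen : ∀ U : Set X, IsOpen U → ρ₁ U = ρ₂ U := by
    intro U hU
    rw [measure_isOpen_eq_biSup ρ₁ hU, measure_isOpen_eq_biSup ρ₂ hU]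
    exact iSup_congr fun f => iSup_congr fun hf => h f hf.1 hf.2.1 hf.2.2.1
  ext E hE
  rw [Set.measure_eq_iInf_isOpen E ρ₁, Set.measure_eq_iInf_isOpen E ρ₂]
  exact iInf_congr fun U => iInf_congr fun hEU => iInf_congr fun hUo => hopen U hUo

end RadonAux
section HaarMeasurable

variable {Arr Obj : Type} [TopologicalSpace Arr] [TopologicalSpace Obj]
  [T2Space Arr] [T2Space Obj] [SecondCountableTopology Arr] [SecondCountableTopology Obj]
  [LocallyCompactSpace Arr] [LocallyCompactSpace Obj]
  [MeasurableSpace Arr] [MeasurableSpace Obj] [BorelSpace Arr] [BorelSpace Obj]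

/-- A family of Borel measures, finite on compacts, depending continuously on the parameter
against compactly supported continuous functions, is a measurable family. -/
lemma haar_measurable (κ : Obj → Measure Arr)
    (hfin : ∀ u (K : Set Arr), IsCompact K → κ u K < ⊤)
    (hcont : ∀ f : Arr → ℝ, Continuous f → HasCompactSupport f →
      Continuous fun u => ∫ b, f b ∂(κ u)) :
    Measurable κ := by
  have hFMC : ∀ u, IsFiniteMeasureOnCompacts (κ u) := fun u => ⟨fun {K} hK => hfin u K hK⟩
  have hopen : ∀ U : Set Arr, IsOpen U → Measurable fun u => κ u U := by
    intro U hU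
    have heq : (fun u => κ u U) = fun u =>
        ⨆ (f : Arr → ℝ) (_ : Continuous f ∧ HasCompactSupport f ∧
          (∀ x, f x ∈ Set.Icc (0:ℝ) 1) ∧ ∀ x ∉ U, f x = 0),
          ∫⁻ x, ENNReal.ofReal (f x) ∂(κ u) := by
      funext u; haveI := hFMC u; exact measure_isOpen_eq_biSup (κ u) hU
    rw [heq]
    apply LowerSemicontinuous.measurable
    refine lowerSemicontinuous_iSup fun f => lowerSemicontinuous_iSup fun hf => ?_
    have heq2 : (fun u => ∫⁻ x, ENNReal.ofReal (f x) ∂(κ u)) =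
        fun u => ENNReal.ofReal (∫ x, f x ∂(κ u)) := by
      funext u; haveI := hFMC u
      rw [MeasureTheory.ofReal_integral_eq_lintegral_ofReal
        (hf.1.integrable_of_hasCompactSupport hf.2.1)
        (Eventually.of_forall fun x => (hf.2.2.1 x).1)]
    rw [heq2]
    exact (ENNReal.continuous_ofReal.comp (hcont f hf.1 hf.2.1)).lowerSemicontinuous
  set K : CompactExhaustion Arr := CompactExhaustion.choice Arr with hK
  set V : ℕ → Set Arr := fun n => interior (K (n+1)) with hVdef
  have hVopen : ∀ n, IsOpen (V n) := fun n => isOpen_interior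
  have hVmono : Monotone V := monotone_nat_of_le_succ fun n =>
    interior_mono ((K.subset_interior_succ _).trans interior_subset)
  have hVfin : ∀ u n, κ u (V n) ≠ ⊤ := fun u n =>
    ((measure_mono interior_subset).trans_lt (hfin u _ (K.isCompact _))).ne
  have hVuniv : ⋃ n, V n = Set.univ := by
    apply Set.eq_univ_of_forall; intro x
    rcases Set.iUnion_eq_univ_iff.mp K.iUnion_eq x with ⟨n, hn⟩
    exact Set.mem_iUnion.mpr ⟨n, K.subset_interior_succ n hn⟩
  have main : ∀ ⦃E : Set Arr⦄, MeasurableSet E → ∀ n, Measurable fun u => κ u (E ∩ V n) := by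
    refine MeasurableSpace.induction_on_inter
      (C := fun E _ => ∀ n, Measurable fun u => κ u (E ∩ V n)) ?_ isPiSystem_isOpen ?_ ?_ ?_ ?_
    · exact BorelSpace.measurable_eq
    · intro n; simp only [Set.empty_inter, measure_empty]; exact measurable_const
    · intro t ht n
      exact hopen (t ∩ V n) (ht.inter (hVopen n))
    · intro t htm iht n
      have heq : ∀ u, κ u (tᶜ ∩ V n) = κ u (V n) - κ u (t ∩ V n) := by
        intro u
        have hdiff : V n \ (t ∩ V n) = tᶜ ∩ V n := by
          ext x; simp [Set.mem_diff]; tauto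
        rw [← hdiff, measure_diff Set.inter_subset_right
          (htm.inter (hVopen n).measurableSet).nullMeasurableSet
          (ne_top_of_le_ne_top (hVfin u n) (measure_mono Set.inter_subset_right))]
      simp only [heq]
      exact (hopen (V n) (hVopen n)).sub (iht n)
    · intro f hdisj hfm ihf n
      have heq : ∀ u, κ u ((⋃ i, f i) ∩ V n) = ∑' i, κ u (f i ∩ V n) := by
        intro u
        rw [Set.iUnion_inter]
        exact measure_iUnion (fun i j hij => ((hdisj hij).inter_left _).inter_right _)
          (fun i => (hfm i).inter (hVopen n).measurableSet)
      simp only [heq]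
      exact Measurable.ennreal_tsum fun i => ihf i n
  apply Measure.measurable_of_measurable_coe
  intro E hE
  have heq : ∀ u, κ u E = ⨆ n, κ u (E ∩ V n) := by
    intro u
    rw [← Monotone.measure_iUnion (fun i j hij => Set.inter_subset_inter_right E (hVmono hij)),
      ← Set.inter_iUnion, hVuniv, Set.inter_univ]
  simp only [heq]
  exact Measurable.iSup fun n => main hE n

end HaarMeasurable
section PhiMap

open Classical in
/-- Total extension of left translation by `a` in the groupoid `D`. -/
noncomputable def phiMap {Arr Obj : Type} (D : GroupoidData Arr Obj) (a : Arr) : Arr → Arr :=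
  fun b => if D.r b = D.s a then D.comp a b else b

variable {Arr Obj : Type} [TopologicalSpace Arr] [TopologicalSpace Obj]
  [T2Space Arr] [T2Space Obj] [SecondCountableTopology Arr] [SecondCountableTopology Obj]
  [LocallyCompactSpace Arr] [LocallyCompactSpace Obj]
  [MeasurableSpace Arr] [MeasurableSpace Obj] [BorelSpace Arr] [BorelSpace Obj]
  {D : GroupoidData Arr Obj}

lemma phiMap_eq_of_mem (a : Arr) {b : Arr} (h : D.r b = D.s a) :
    phiMap D a b = D.comp a b := by simp [phiMap, h]

lemma phiMap_eq_of_not_mem (a : Arr) {b : Arr} (h : ¬ D.r b = D.s a) :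
    phiMap D a b = b := by simp [phiMap, h]

lemma phi_continuousOn (hDtop : IsTopologicalGroupoid D) (a : Arr) :
    ContinuousOn (phiMap D a) {b | D.r b = D.s a} := by
  rw [continuousOn_iff_continuous_restrict]
  have heq : Set.domRestrict {b | D.r b = D.s a} (phiMap D a) =
      fun z : {b | D.r b = D.s a} => D.comp a z.1 := by
    funext z; exact phiMap_eq_of_mem a z.2
  rw [heq]
  have h1 : Continuous fun z : {b | D.r b = D.s a} =>
      (⟨(a, z.1), (z.2 : D.r z.1 = D.s a).symm⟩ : {q : Arr × Arr // D.s q.1 = D.r q.2}) :=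
    Continuous.subtype_mk (continuous_const.prodMk continuous_subtype_val) _
  exact hDtop.continuous_comp.comp h1

lemma phi_measurable (hDtop : IsTopologicalGroupoid D) (a : Arr) :
    Measurable (phiMap D a) := by
  have hs : MeasurableSet {b | D.r b = D.s a} :=
    (isClosed_eq hDtop.continuous_r continuous_const).measurableSet
  refine measurable_of_restrict_of_restrict_compl hs ?_ ?_
  · exact ((phi_continuousOn hDtop a).mono le_rfl).restrict.measurable
  · have heq : Set.domRestrict {b | D.r b = D.s a}ᶜ (phiMap D a) = fun z => z.1 := by
      funext z; exact phiMap_eq_of_not_mem a z.2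
    rw [heq]
    exact measurable_subtype_coe

/-- The pair version `(γ, η) ↦ φ_{γ⁻¹}(η)` is jointly measurable. -/
lemma phi_pair_measurable (hDtop : IsTopologicalGroupoid D) :
    Measurable fun p : Arr × Arr => phiMap D (D.inv p.1) p.2 := by
  set W : Set (Arr × Arr) := {p | D.r p.2 = D.s (D.inv p.1)} with hW
  have hWm : MeasurableSet W :=
    (isClosed_eq (hDtop.continuous_r.comp continuous_snd)
      (hDtop.continuous_s.comp (hDtop.continuous_inv.comp continuous_fst))).measurableSet
  refine measurable_of_restrict_of_restrict_compl hWm ?_ ?_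
  · have heq : Set.domRestrict W (fun p : Arr × Arr => phiMap D (D.inv p.1) p.2) =
        fun z : W => D.comp (D.inv z.1.1) z.1.2 := by
      funext z; exact phiMap_eq_of_mem _ z.2
    rw [heq]
    have h1 : Continuous fun z : W =>
        (⟨(D.inv z.1.1, z.1.2), (z.2 : D.r z.1.2 = D.s (D.inv z.1.1)).symm⟩ :
          {q : Arr × Arr // D.s q.1 = D.r q.2}) :=
      Continuous.subtype_mk
        (((hDtop.continuous_inv.comp continuous_fst).comp continuous_subtype_val).prodMk
          (continuous_snd.comp continuous_subtype_val)) _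
    exact ((hDtop.continuous_comp.comp h1)).measurable
  · have heq : Set.domRestrict Wᶜ (fun p : Arr × Arr => phiMap D (D.inv p.1) p.2) =
        fun z => z.1.2 := by
      funext z; exact phiMap_eq_of_not_mem _ z.2
    rw [heq]
    exact measurable_snd.comp measurable_subtype_coe

end PhiMap
section Invariance

variable {Arr Obj : Type} [TopologicalSpace Arr] [TopologicalSpace Obj]
  [T2Space Arr] [T2Space Obj] [SecondCountableTopology Arr] [SecondCountableTopology Obj]
  [LocallyCompactSpace Arr] [LocallyCompactSpace Obj]
  [MeasurableSpace Arr] [MeasurableSpace Obj] [BorelSpace Arr] [BorelSpace Obj]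
  {D : GroupoidData Arr Obj} {κ : Obj → MeasureTheory.Measure Arr}

lemma haar_null_compl (hκ : IsHaarSystemOn D Set.univ κ) (u : Obj) :
    κ u {b | D.r b = u}ᶜ = 0 := by simpa using hκ.1 u

lemma haar_ae (hκ : IsHaarSystemOn D Set.univ κ) (u : Obj) :
    ∀ᵐ b ∂κ u, D.r b = u := by
  rw [ae_iff]
  simpa [Set.compl_setOf] using haar_null_compl hκ u

/-- Left invariance of the Haar system, as an identity of measures: the (extended) left
translation by `a` maps `κ (s a)` onto `κ (r a)`. -/
lemma haar_map_phi (hD : D.IsGroupoid) (hDtop : IsTopologicalGroupoid D)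
    (hκ : IsHaarSystemOn D Set.univ κ) (a : Arr) :
    (κ (D.s a)).map (phiMap D a) = κ (D.r a) := by
  have hn := haar_null_compl hκ
  have hFMC : ∀ u, IsFiniteMeasureOnCompacts (κ u) := fun u => ⟨fun {K} hK => hκ.2.2.1 u K hK⟩
  haveI := hFMC (D.s a); haveI := hFMC (D.r a)
  have hphim := phi_measurable hDtop a
  have hsub : ∀ C : Set Arr, (phiMap D a ⁻¹' C) ∩ {b | D.r b = D.s a} ⊆
      phiMap D (D.inv a) '' (C ∩ {c | D.r c = D.r a}) := by
    rintro C b ⟨hbC, hb⟩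
    have hb : D.r b = D.s a := hb
    refine ⟨D.comp a b, ⟨?_, hD.r_comp a b hb.symm⟩, ?_⟩
    · have hbC' : phiMap D a b ∈ C := hbC
      rwa [phiMap_eq_of_mem a hb] at hbC'
    · rw [phiMap_eq_of_mem _ (by rw [hD.s_inv]; exact hD.r_comp a b hb.symm),
        hD.inv_cancel_left hb]
  have himg : ∀ C : Set Arr, IsCompact C → IsCompact (phiMap D (D.inv a) ''
      (C ∩ {c | D.r c = D.r a})) := by
    intro C hC
    refine IsCompact.image_of_continuousOn
      (hC.inter_right (isClosed_eq hDtop.continuous_r continuous_const)) ?_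
    refine (phi_continuousOn hDtop (D.inv a)).mono fun c hc => ?_
    show D.r c = D.s (D.inv a)
    rw [hD.s_inv]; exact hc.2
  have hbnd : ∀ C : Set Arr, κ (D.s a) (phiMap D a ⁻¹' C) ≤
      κ (D.s a) (phiMap D (D.inv a) '' (C ∩ {c | D.r c = D.r a})) := by
    intro C
    calc κ (D.s a) (phiMap D a ⁻¹' C)
        ≤ κ (D.s a) ((phiMap D a ⁻¹' C ∩ {b | D.r b = D.s a}) ∪ {b | D.r b = D.s a}ᶜ) :=
          measure_mono (fun x hx => by
            by_cases h : D.r x = D.s a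
            · exact Or.inl ⟨hx, h⟩
            · exact Or.inr h)
      _ ≤ κ (D.s a) (phiMap D a ⁻¹' C ∩ {b | D.r b = D.s a}) + κ (D.s a) {b | D.r b = D.s a}ᶜ :=
          measure_union_le _ _
      _ = κ (D.s a) (phiMap D a ⁻¹' C ∩ {b | D.r b = D.s a}) := by rw [hn, add_zero]
      _ ≤ _ := measure_mono (hsub C)
  haveI : IsFiniteMeasureOnCompacts ((κ (D.s a)).map (phiMap D a)) := by
    constructor
    intro K hK
    rw [Measure.map_apply hphim hK.measurableSet]
    exact lt_of_le_of_lt (hbnd K) (himg K hK).measure_lt_top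
  apply measure_ext_of_cc
  intro f hf hfc hfIcc
  have hfm : Measurable fun x => ENNReal.ofReal (f x) :=
    ENNReal.measurable_ofReal.comp hf.measurable
  rw [lintegral_map hfm hphim]
  have hae := haar_ae hκ (D.s a)
  have hcongr : (fun b => ENNReal.ofReal (f (phiMap D a b))) =ᵐ[κ (D.s a)]
      fun b => ENNReal.ofReal (f (D.comp a b)) :=
    hae.mono fun b hb => by simp only [phiMap_eq_of_mem a hb]
  rw [lintegral_congr_ae hcongr]
  have hK' : IsCompact (phiMap D (D.inv a) '' (tsupport f ∩ {c | D.r c = D.r a})) :=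
    himg _ hfc
  have hgm : AEStronglyMeasurable (fun b => f (D.comp a b)) (κ (D.s a)) := by
    refine (hf.measurable.comp hphim).aestronglyMeasurable.congr ?_
    exact hae.mono fun b hb => by
      show f (phiMap D a b) = f (D.comp a b)
      rw [phiMap_eq_of_mem a hb]
  have hbound : ∀ᵐ b ∂κ (D.s a), ‖f (D.comp a b)‖ ≤
      (phiMap D (D.inv a) '' (tsupport f ∩ {c | D.r c = D.r a})).indicator
        (fun _ => (1:ℝ)) b := by
    refine hae.mono fun b hb => ?_
    have hb : D.r b = D.s a := hb
    by_cases h0 : f (D.comp a b) = 0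
    · rw [h0, norm_zero]
      exact Set.indicator_nonneg (fun _ _ => zero_le_one) b
    · have hmem : D.comp a b ∈ tsupport f ∩ {c | D.r c = D.r a} :=
        ⟨subset_tsupport f h0, hD.r_comp a b hb.symm⟩
      have hb' : phiMap D (D.inv a) (D.comp a b) = b := by
        rw [phiMap_eq_of_mem _ (by rw [hD.s_inv]; exact hD.r_comp a b hb.symm),
          hD.inv_cancel_left hb]
      have hbmem : b ∈ phiMap D (D.inv a) '' (tsupport f ∩ {c | D.r c = D.r a}) :=
        ⟨D.comp a b, hmem, hb'⟩
      rw [Set.indicator_of_mem hbmem, Real.norm_eq_abs, abs_le]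
      exact ⟨by linarith [(hfIcc (D.comp a b)).1], (hfIcc (D.comp a b)).2⟩
  have hint : Integrable (fun b => f (D.comp a b)) (κ (D.s a)) := by
    refine Integrable.mono' ?_ hgm hbound
    rw [integrable_indicator_iff hK'.isClosed.measurableSet]
    exact integrableOn_const hK'.measure_lt_top.ne
  rw [← MeasureTheory.ofReal_integral_eq_lintegral_ofReal hint
    (Eventually.of_forall fun b => (hfIcc _).1)]
  rw [hκ.2.2.2.1 a (Set.mem_univ a) f hf hfc]
  rw [MeasureTheory.ofReal_integral_eq_lintegral_ofReal
    (hf.integrable_of_hasCompactSupport hfc) (Eventually.of_forall fun b => (hfIcc _).1)]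

end Invariance
section Symmetry

variable {Arr Obj : Type} [TopologicalSpace Arr] [TopologicalSpace Obj]
  [T2Space Arr] [T2Space Obj] [SecondCountableTopology Arr] [SecondCountableTopology Obj]
  [LocallyCompactSpace Arr] [LocallyCompactSpace Obj]
  [MeasurableSpace Arr] [MeasurableSpace Obj] [BorelSpace Arr] [BorelSpace Obj]
  {D : GroupoidData Arr Obj} {κ : Obj → MeasureTheory.Measure Arr}

/-- Key symmetry: the measure induced by the saturation `s_*(μ∘κ)` is invariant under
inversion. -/
lemma nu_sat_symm (hD : D.IsGroupoid) (hDtop : IsTopologicalGroupoid D)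
    (hκ : IsHaarSystemOn D Set.univ κ) (hκm : Measurable κ) (μ : Measure Obj) :
    (nuMeasure κ ((nuMeasure κ μ).map D.s)).map D.inv
      = nuMeasure κ ((nuMeasure κ μ).map D.s) := by
  have hFMC : ∀ u, IsFiniteMeasureOnCompacts (κ u) := fun u => ⟨fun {K} hK => hκ.2.2.1 u K hK⟩
  have hι : Measurable D.inv := hDtop.continuous_inv.measurable
  have hs : Measurable D.s := hDtop.continuous_s.measurable
  ext E hE
  rw [Measure.map_apply hι hE]
  have expand : ∀ F : Set Arr, MeasurableSet F →
      nuMeasure κ ((nuMeasure κ μ).map D.s) F = ∫⁻ u, ∫⁻ γ, κ (D.s γ) F ∂κ u ∂μ := by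
    intro F hF
    have hcoe : Measurable fun u => κ u F := (Measure.measurable_coe hF).comp hκm
    have hcs : Measurable fun γ => κ (D.s γ) F := hcoe.comp hs
    rw [nuMeasure, Measure.bind_apply hF hκm.aemeasurable, lintegral_map hcoe hs, nuMeasure,
      Measure.lintegral_bind hκm.aemeasurable hcs.aemeasurable]
  rw [expand _ (hι hE), expand _ hE]
  refine lintegral_congr fun u => ?_
  haveI := hFMC u
  have key : ∀ γ, D.r γ = u → ∀ F : Set Arr, MeasurableSet F →
      κ (D.s γ) F = κ u (phiMap D (D.inv γ) ⁻¹' F) := by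
    intro γ hγ F hF
    have h1 := haar_map_phi hD hDtop hκ (D.inv γ)
    rw [hD.s_inv, hD.r_inv, hγ] at h1
    rw [← h1, Measure.map_apply (phi_measurable hDtop _) hF]
  have hae := haar_ae hκ u
  have hind : ∀ (γ : Arr) (F : Set Arr), MeasurableSet F →
      κ u (phiMap D (D.inv γ) ⁻¹' F) =
        ∫⁻ η, F.indicator 1 (phiMap D (D.inv γ) η) ∂κ u := by
    intro γ F hF
    have heq : (fun η => F.indicator (1 : Arr → ENNReal) (phiMap D (D.inv γ) η)) =
        (phiMap D (D.inv γ) ⁻¹' F).indicator 1 := by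
      funext η
      by_cases h : phiMap D (D.inv γ) η ∈ F
      · simp [Set.indicator_apply, h]
      · simp [Set.indicator_apply, h]
    rw [heq, lintegral_indicator_one ((phi_measurable hDtop _) hF)]
  calc ∫⁻ γ, κ (D.s γ) (D.inv ⁻¹' E) ∂κ u
      = ∫⁻ γ, ∫⁻ η, (D.inv ⁻¹' E).indicator 1 (phiMap D (D.inv γ) η) ∂κ u ∂κ u :=
        lintegral_congr_ae (hae.mono fun γ hγ => by
          beta_reduce
          rw [key γ hγ _ (hι hE), hind γ _ (hι hE)])
    _ = ∫⁻ γ, ∫⁻ η, E.indicator 1 (phiMap D (D.inv η) γ) ∂κ u ∂κ u := by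
        refine lintegral_congr_ae (hae.mono fun γ hγ => ?_)
        refine lintegral_congr_ae (hae.mono fun η hη => ?_)
        beta_reduce
        have hγ : D.r γ = u := hγ
        have hη : D.r η = u := hη
        have h1 : phiMap D (D.inv γ) η = D.comp (D.inv γ) η :=
          phiMap_eq_of_mem _ (by rw [hD.s_inv, hγ, hη])
        have h2 : phiMap D (D.inv η) γ = D.comp (D.inv η) γ :=
          phiMap_eq_of_mem _ (by rw [hD.s_inv, hη, hγ])
        have h3 : D.inv (D.comp (D.inv γ) η) = D.comp (D.inv η) γ := by
          rw [hD.inv_comp_eq (by rw [hD.s_inv, hγ, hη]), hD.inv_inv]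
        rw [h1, h2, ← h3]
        by_cases hmem : D.inv (D.comp (D.inv γ) η) ∈ E
        · simp [Set.indicator_apply, hmem]
        · simp [Set.indicator_apply, hmem]
    _ = ∫⁻ η, ∫⁻ γ, E.indicator 1 (phiMap D (D.inv η) γ) ∂κ u ∂κ u := by
        refine lintegral_lintegral_swap ?_
        have hm : Measurable fun p : Arr × Arr => phiMap D (D.inv p.2) p.1 :=
          (phi_pair_measurable hDtop).comp measurable_swap
        exact ((measurable_one.indicator hE).comp hm).aemeasurable
    _ = ∫⁻ η, κ u (phiMap D (D.inv η) ⁻¹' E) ∂κ u :=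
        lintegral_congr fun η => (hind η E hE).symm
    _ = ∫⁻ η, κ (D.s η) E ∂κ u :=
        lintegral_congr_ae (hae.mono fun η hη => (key η hη E hE).symm)

end Symmetry

/-- Mapping preserves absolute continuity. -/
lemma mapAC {α β : Type} [MeasurableSpace α] [MeasurableSpace β] {ρ₁ ρ₂ : Measure α}
    {f : α → β} (hf : Measurable f) (h : ρ₁ ≪ ρ₂) : ρ₁.map f ≪ ρ₂.map f :=
  Measure.AbsolutelyContinuous.mk fun E hE h0 => by
    rw [Measure.map_apply hf hE] at h0 ⊢; exact h h0
/-- For a second countable locally compact Hausdorff groupoid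
`S` with Haar system `κ`, a Radon measure `μ` on the unit space, `ν = μ∘κ`,
`ν₀` a finite measure equivalent to `ν`, the saturation `[μ] = s_*ν₀` is
quasi-invariant; and if `μ` is quasi-invariant then `μ` and `[μ]` are
equivalent. -/
theorem statement5 {Arr Obj : Type} [TopologicalSpace Arr] [TopologicalSpace Obj]
    [T2Space Arr] [T2Space Obj] [SecondCountableTopology Arr]
    [SecondCountableTopology Obj] [LocallyCompactSpace Arr] [LocallyCompactSpace Obj]
    [MeasurableSpace Arr] [MeasurableSpace Obj] [BorelSpace Arr] [BorelSpace Obj]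
    (D : GroupoidData Arr Obj) (hD : D.IsGroupoid) (hDtop : IsTopologicalGroupoid D)
    (κ : Obj → MeasureTheory.Measure Arr) (hκ : IsHaarSystemOn D Set.univ κ)
    (μ : MeasureTheory.Measure Obj) [μ.Regular]
    (ν₀ : MeasureTheory.Measure Arr) [MeasureTheory.IsFiniteMeasure ν₀]
    (hν₀ : ν₀ ≪ nuMeasure κ μ ∧ nuMeasure κ μ ≪ ν₀) :
    IsQuasiInvariant κ D.inv (ν₀.map D.s) ∧
    (IsQuasiInvariant κ D.inv μ → (μ ≪ ν₀.map D.s ∧ ν₀.map D.s ≪ μ)) := by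
  obtain ⟨hν₀ν, hνν₀⟩ := hν₀
  have hκm : Measurable κ := haar_measurable κ hκ.2.2.1 hκ.2.2.2.2
  have hs : Measurable D.s := hDtop.continuous_s.measurable
  have hr : Measurable D.r := hDtop.continuous_r.measurable
  have hι : Measurable D.inv := hDtop.continuous_inv.measurable
  have hbind : ∀ τ₁ τ₂ : Measure Obj, τ₁ ≪ τ₂ → nuMeasure κ τ₁ ≪ nuMeasure κ τ₂ := by
    intro τ₁ τ₂ h
    refine Measure.AbsolutelyContinuous.mk fun E hE h0 => ?_
    rw [nuMeasure, Measure.bind_apply hE hκm.aemeasurable] at h0 ⊢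
    have hcoe : Measurable fun u => κ u E := (Measure.measurable_coe hE).comp hκm
    rw [lintegral_eq_zero_iff hcoe] at h0 ⊢
    exact h0.filter_mono h.ae_le
  set ν : Measure Arr := nuMeasure κ μ with hνdef
  set τ : Measure Obj := ν.map D.s with hτdef
  have hsymm : (nuMeasure κ τ).map D.inv = nuMeasure κ τ := nu_sat_symm hD hDtop hκ hκm μ
  have h1 : ν₀.map D.s ≪ τ := mapAC hs hν₀ν
  have h2 : τ ≪ ν₀.map D.s := mapAC hs hνν₀
  have hb1 : nuMeasure κ (ν₀.map D.s) ≪ nuMeasure κ τ := hbind _ _ h1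
  have hb2 : nuMeasure κ τ ≪ nuMeasure κ (ν₀.map D.s) := hbind _ _ h2
  constructor
  · constructor
    · have hh := mapAC hι hb2
      rw [hsymm] at hh
      exact hb1.trans hh
    · have hh := mapAC hι hb1
      rw [hsymm] at hh
      exact hh.trans hb2
  · rintro ⟨hq1, hq2⟩
    have hrs : ν.map D.s = (ν.map D.inv).map D.r := by
      rw [Measure.map_map hr hι]
      congr 1
      funext a
      exact (hD.r_inv a).symm
    have hwd : ν.map D.r = μ.withDensity fun u => κ u Set.univ := by
      ext E hE
      rw [Measure.map_apply hr hE, hνdef, nuMeasure, Measure.bind_apply (hr hE) hκm.aemeasurable,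
        withDensity_apply _ hE, ← lintegral_indicator hE]
      refine lintegral_congr fun u => ?_
      by_cases hu : u ∈ E
      · rw [Set.indicator_of_mem hu]
        apply le_antisymm (measure_mono (Set.subset_univ _))
        calc κ u Set.univ ≤ κ u (D.r ⁻¹' E ∪ {b | D.r b = u}ᶜ) := measure_mono (fun b _ => by
              by_cases hbu : D.r b = u
              · exact Or.inl (by rw [Set.mem_preimage, hbu]; exact hu)
              · exact Or.inr hbu)
          _ ≤ κ u (D.r ⁻¹' E) + κ u {b | D.r b = u}ᶜ := measure_union_le _ _
          _ = κ u (D.r ⁻¹' E) := by rw [haar_null_compl hκ u, add_zero]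
      · rw [Set.indicator_of_notMem hu]
        refine measure_mono_null (fun b hb => ?_) (haar_null_compl hκ u)
        exact fun hbu => hu (hbu ▸ (Set.mem_preimage.mp hb))
    have hpos : ∀ u, κ u Set.univ ≠ 0 := fun u =>
      (hκ.2.1 u Set.univ isOpen_univ
        ⟨D.unit u, Set.mem_univ _, hD.r_unit u, Set.mem_univ _⟩).ne'
    have hμwd : μ ≪ μ.withDensity fun u => κ u Set.univ := by
      refine Measure.AbsolutelyContinuous.mk fun E hE h0 => ?_
      rw [withDensity_apply _ hE] at h0
      have hcoe : Measurable fun u => κ u Set.univ :=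
        (Measure.measurable_coe MeasurableSet.univ).comp hκm
      have h1' := (lintegral_eq_zero_iff hcoe).mp h0
      have h3 : ∀ᵐ _u ∂μ.restrict E, False := h1'.mono fun u hu => hpos u hu
      have h4 : μ.restrict E Set.univ = 0 := by simpa [ae_iff] using h3
      rwa [Measure.restrict_apply_univ] at h4
    have c1 : μ ≪ ν.map D.r := by rw [hwd]; exact hμwd
    have c2 : ν.map D.r ≪ μ := by rw [hwd]; exact withDensity_absolutelyContinuous _ _
    have c3 : ν.map D.r ≪ τ := by
      rw [hτdef, hrs]
      exact mapAC hr hq1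
    have c4 : τ ≪ ν.map D.r := by
      rw [hτdef, hrs]
      exact mapAC hr hq2
    exact ⟨(c1.trans c3).trans h2, h1.trans (c4.trans c2)⟩
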